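/- arXiv:2510.03227 — 3 statements merged into one kernel-verified Lean document; each statement's English description precedes it below -/
import Mathlib

section
/- Let N ≥ 1, let θ₁,…,θ_N ∈ ℝ, and let t₁,…,t_{N−1} ∈ {0,1}. On the N-qubit space (ℂ²)^{⊗N}, apply for each j ∈ {1,…,N−1} the gate CNOT_{N,j} (control qubit N, target qubit j) to the product state ⊗_{j=1}^{N} |+_{θ_j}⟩, and then project each qubit j ∈ {1,…,N−1} onto the computational basis state |t_j⟩. The resulting (unnormalized) vector on qubit N equals 2^{−(N−1)/2} · e^{i Σ_{j<N} t_j θ_j} · |+_{θ'}⟩, where θ' = θ_N + Σ_{j=1}^{N−1} (−1)^{t_j} θ_j. -/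
open Complex

/-- The rotated plus state `|+_θ⟩ = (1/√2)(|0⟩ + e^{iθ}|1⟩)`. -/
noncomputable def ketPlus (θ : ℝ) : Fin 2 → ℂ :=
  ![(Real.sqrt 2)⁻¹, Complex.exp (θ * Complex.I) * (Real.sqrt 2)⁻¹]

/-- The CNOT gate with control qubit `c` and target qubit `t` (for `c ≠ t`), acting on an
`n`-qubit state vector: it maps the basis vector indexed by the bit string `x` to the one
indexed by `x` with bit `t` replaced by `x_t ⊕ x_c`.  Since the gate is a self-inverse
permutation of the basis, its action on coordinate functions is precomposition with that
permutation. -/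
def cnotGate {n : ℕ} (c t : Fin n) (ψ : (Fin n → Fin 2) → ℂ) : (Fin n → Fin 2) → ℂ :=
  fun x => ψ (Function.update x t (x t + x c))

lemma ketPlus_apply (θ : ℝ) (v : Fin 2) :
    ketPlus θ v = Complex.exp ((((v : ℕ) : ℝ) * θ : ℝ) * Complex.I) * (Real.sqrt 2)⁻¹ := by
  fin_cases v <;> simp [ketPlus]

lemma val_add (v b : Fin 2) : (((v + b : Fin 2) : ℕ) : ℝ) = ((v:ℕ):ℝ) + ((b:ℕ):ℝ) * (-1:ℝ)^((v:ℕ)) := by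
  fin_cases v <;> fin_cases b <;> norm_num [show (1+1:Fin 2)=0 from rfl]

lemma fold_eval {n : ℕ} (l : List (Fin n)) (hl : l.Nodup)
    (ψ : (Fin (n+1) → Fin 2) → ℂ) (x : Fin (n+1) → Fin 2) :
    (l.foldl (fun ψ j => cnotGate (Fin.last n) j.castSucc ψ) ψ) x
      = ψ (fun i => if ∃ j ∈ l, j.castSucc = i then x i + x (Fin.last n) else x i) := by
  induction l generalizing ψ with
  | nil => simp
  | cons j l ih =>
    obtain ⟨hj, hl'⟩ := List.nodup_cons.mp hl
    simp only [List.foldl_cons]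
    rw [ih hl']
    unfold cnotGate
    congr 1
    have h2 : ¬ ∃ k ∈ l, k.castSucc = Fin.last n := by
      rintro ⟨k, _, hk⟩; exact (Fin.castSucc_lt_last k).ne hk
    funext i
    rcases eq_or_ne i j.castSucc with rfl | hi
    · have h1 : ¬ ∃ k ∈ l, k.castSucc = j.castSucc := by
        rintro ⟨k, hk, hkj⟩
        exact hj (Fin.castSucc_injective _ hkj ▸ hk)
      rw [Function.update_self, if_pos ⟨j, List.mem_cons_self (a := j) (l := l), rfl⟩]
      simp only [if_neg h1, if_neg h2]
    · rw [Function.update_of_ne hi]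
      have hcons : (∃ k ∈ j :: l, k.castSucc = i) ↔ (∃ k ∈ l, k.castSucc = i) := by
        constructor
        · rintro ⟨k, hk, hki⟩
          rcases List.mem_cons.mp hk with rfl | hk'
          · exact absurd hki (fun h => hi h.symm)
          · exact ⟨k, hk', hki⟩
        · rintro ⟨k, hk, hki⟩; exact ⟨k, List.mem_cons_of_mem _ hk, hki⟩
      rw [if_congr hcons rfl rfl]

/-- applying `CNOT_{N,j}` (control the last qubit, target `j`) for each
`j ∈ {1,…,N−1}` to `⊗_j |+_{θ_j}⟩`, then projecting qubit `j` onto `|t_j⟩` for every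
`j < N`, leaves on the last qubit the vector
`2^{−(N−1)/2} · e^{i Σ_{j<N} t_j θ_j} · |+_{θ'}⟩` with
`θ' = θ_N + Σ_{j<N} (−1)^{t_j} θ_j`.  (Here `N = n + 1 ≥ 1`, the qubits are indexed by
`Fin (n+1)`, the control is `Fin.last n`, and the targets are the `j.castSucc` for
`j : Fin n`.) -/
theorem plugged_rsp_correctness (n : ℕ) (θ : Fin (n + 1) → ℝ) (t : Fin n → Fin 2) :
    let ctrl : Fin (n + 1) := Fin.last n
    let ψ₀ : (Fin (n + 1) → Fin 2) → ℂ := fun x => ∏ j, ketPlus (θ j) (x j)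
    let ψfinal : (Fin (n + 1) → Fin 2) → ℂ :=
      (List.finRange n).foldl (fun ψ j => cnotGate ctrl j.castSucc ψ) ψ₀
    let θ' : ℝ := θ ctrl + ∑ j : Fin n, (-1 : ℝ) ^ ((t j : ℕ)) * θ j.castSucc
    ∀ b : Fin 2,
      ψfinal (Fin.snoc t b) =
        (((Real.sqrt 2)⁻¹ : ℂ) ^ n *
            Complex.exp ((∑ j : Fin n, ((t j : ℕ) : ℝ) * θ j.castSucc) * Complex.I)) *
          ketPlus θ' b := by
  intro ctrl ψ₀ ψfinal θ' b
  have hfold := fold_eval (List.finRange n) (List.nodup_finRange n) ψ₀ (Fin.snoc t b)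
  have hψ : ψfinal (Fin.snoc t b) = ψ₀ (Fin.snoc (fun j => t j + b) b) := by
    rw [show ψfinal = (List.finRange n).foldl (fun ψ j => cnotGate ctrl j.castSucc ψ) ψ₀ from rfl,
      hfold]
    congr 1
    funext i
    induction i using Fin.lastCases with
    | last =>
      rw [if_neg (by rintro ⟨k, _, hk⟩; exact (Fin.castSucc_lt_last k).ne hk)]
      simp
    | cast j =>
      rw [if_pos ⟨j, List.mem_finRange j, rfl⟩]
      simp
  rw [hψ]
  rw [show ψ₀ = fun x => ∏ j, ketPlus (θ j) (x j) from rfl]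
  beta_reduce
  rw [Fin.prod_univ_castSucc]
  simp only [Fin.snoc_castSucc, Fin.snoc_last]
  simp only [ketPlus_apply]
  rw [Finset.prod_mul_distrib, Finset.prod_const, ← Complex.exp_sum]
  have hreal : (∑ j : Fin n, ((((t j + b : Fin 2) : ℕ) : ℝ) * θ j.castSucc)) + ((b:ℕ):ℝ) * θ ctrl
      = (∑ j : Fin n, (((t j : ℕ)):ℝ) * θ j.castSucc) + ((b:ℕ):ℝ) * θ' := by
    show _ = _ + ((b:ℕ):ℝ) * (θ ctrl + ∑ j : Fin n, (-1 : ℝ) ^ ((t j : ℕ)) * θ j.castSucc)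
    simp only [val_add, add_mul, Finset.sum_add_distrib, mul_add, Finset.mul_sum, mul_assoc]
    ring
  have key : Complex.exp (∑ j : Fin n, (((((t j + b : Fin 2) : ℕ) : ℝ) * θ j.castSucc : ℝ) : ℂ) * Complex.I)
        * Complex.exp (((((b:ℕ):ℝ) * θ ctrl : ℝ) : ℂ) * Complex.I)
      = Complex.exp (((∑ j : Fin n, ((t j : ℕ) : ℝ) * θ j.castSucc : ℝ) : ℂ) * Complex.I)
        * Complex.exp (((((b:ℕ):ℝ) * θ' : ℝ) : ℂ) * Complex.I) := by
    rw [← Complex.exp_add, ← Complex.exp_add]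
    congr 1
    have h2 := congrArg (fun r : ℝ => (r : ℂ) * Complex.I) hreal
    push_cast at h2 ⊢
    rw [← Finset.sum_mul]
    linear_combination h2
  simp only [Finset.card_univ, Fintype.card_fin, Complex.ofReal_inv]
  linear_combination ((((Real.sqrt 2) : ℂ))⁻¹ ^ n * (((Real.sqrt 2):ℂ))⁻¹) * key
end

section
/- Identify the angle set Θ = {kπ/4 : k = 0,…,7} with the additive group ZMod 8, and for a bit b ∈ {0,1} write σ(b)·x for x if b = 0 and −x if b = 1. Fix any θ ∈ ZMod 8 and any t ∈ {0,1}. Define F, G : (ZMod 8) × {0,1} → (ZMod 8) × {0,1} × (ZMod 8) by F(x, b) = (x, b, σ(b)θ − σ(t)x) and G(x, b) = (σ(b)θ + x, b ⊕ t, −σ(t)x). Then the pushforward of the uniform probability distribution on (ZMod 8) × {0,1} under F equals its pushforward under G. -/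
/-- Sign action of a bit: `sg b x = x` if `b = 0` and `−x` if `b = 1`. -/
def sg (b : Fin 2) (x : ZMod 8) : ZMod 8 := if b = 0 then x else -x

/-- Mapping the uniform distribution by an equivalence gives the uniform distribution. -/
lemma map_uniform_equiv {α : Type*} [Fintype α] [Nonempty α] (e : α ≃ α) :
    (PMF.uniformOfFintype α).map e = PMF.uniformOfFintype α := by
  ext a
  rw [PMF.map_apply]
  rw [tsum_eq_single (e.symm a) (by
    intro b hb
    simp only [ite_eq_right_iff]
    intro h
    exact absurd (by rw [h, Equiv.symm_apply_apply]) (Ne.symm hb))]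
  simp

lemma fin2_add_self (t : Fin 2) : t + t = 0 := by fin_cases t <;> decide

/-- The domain equivalence relating the two maps. -/
def phi (θ : ZMod 8) (t : Fin 2) : (ZMod 8 × Fin 2) ≃ (ZMod 8 × Fin 2) where
  toFun p := (p.1 - sg (p.2 + t) θ, p.2 + t)
  invFun q := (q.1 + sg q.2 θ, q.2 + t)
  left_inv p := by
    simp [add_assoc, fin2_add_self]
  right_inv q := by
    simp [add_assoc, fin2_add_self]

/-- for any fixed `θ : ZMod 8` and `t : Fin 2`, the pushforward of the
uniform distribution on `(ZMod 8) × {0,1}` under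
`F(x,b) = (x, b, σ(b)θ − σ(t)x)` equals its pushforward under
`G(x,b) = (σ(b)θ + x, b ⊕ t, −σ(t)x)`. -/
theorem real_ideal_transcripts_identically_distributed (θ : ZMod 8) (t : Fin 2) :
    (PMF.uniformOfFintype (ZMod 8 × Fin 2)).map
        (fun p => (p.1, p.2, sg p.2 θ - sg t p.1)) =
      (PMF.uniformOfFintype (ZMod 8 × Fin 2)).map
        (fun p => (sg p.2 θ + p.1, p.2 + t, -(sg t p.1))) := by
  have hcomp : (fun p : ZMod 8 × Fin 2 => (p.1, p.2, sg p.2 θ - sg t p.1)) =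
      (fun p : ZMod 8 × Fin 2 => (sg p.2 θ + p.1, p.2 + t, -(sg t p.1))) ∘ (phi θ t) := by
    funext p
    obtain ⟨x, b⟩ := p
    simp only [Function.comp, phi, Equiv.coe_fn_mk]
    refine Prod.ext ?_ (Prod.ext ?_ ?_)
    · show x = sg (b + t) θ + (x - sg (b + t) θ)
      ring
    · show b = b + t + t
      rw [add_assoc, fin2_add_self, add_zero]
    · show sg b θ - sg t x = -(sg t (x - sg (b + t) θ))
      fin_cases b <;> fin_cases t <;> simp [sg] <;> ring
  rw [hcomp, ← PMF.map_comp, map_uniform_equiv]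
end

section
/- Let 0 < p_noise < 1, 0 < p_leak < 1, 0 < c < 1, and let κ ∈ ℕ satisfy (1 − p_noise)^κ > c. Then (i) κ < log(c) / log(1 − p_noise), and (ii) p_leak^κ > c^{log(p_leak)/log(1 − p_noise)} (logarithms natural). -/
/-- correctness-versus-security trade-off: if `0 < p_noise < 1`,
`0 < p_leak < 1`, `0 < c < 1` and `(1 − p_noise)^κ > c`, then
(i) `κ < log(c)/log(1 − p_noise)` and
(ii) `p_leak^κ > c^(log(p_leak)/log(1 − p_noise))`. -/
theorem correctness_security_tradeoff
    (pnoise pleak c : ℝ)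
    (h1 : 0 < pnoise) (h2 : pnoise < 1)
    (h3 : 0 < pleak) (h4 : pleak < 1)
    (h5 : 0 < c) (h6 : c < 1)
    (κ : ℕ) (hκ : (1 - pnoise) ^ κ > c) :
    (κ : ℝ) < Real.log c / Real.log (1 - pnoise) ∧
      pleak ^ κ > c ^ (Real.log pleak / Real.log (1 - pnoise)) := by
  have hq0 : (0:ℝ) < 1 - pnoise := by linarith
  have hq1 : 1 - pnoise < 1 := by linarith
  have hlogq : Real.log (1 - pnoise) < 0 := Real.log_neg hq0 hq1
  have hlogc : Real.log c < Real.log ((1 - pnoise) ^ κ) := Real.log_lt_log h5 hκ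
  rw [Real.log_pow] at hlogc
  have hlogp : Real.log pleak < 0 := Real.log_neg h3 h4
  have hi : (κ : ℝ) < Real.log c / Real.log (1 - pnoise) := by
    rw [lt_div_iff_of_neg hlogq]
    push_cast at hlogc ⊢
    linarith
  refine ⟨hi, ?_⟩
  have hmul : (Real.log c / Real.log (1 - pnoise)) * Real.log pleak < (κ : ℝ) * Real.log pleak :=
    mul_lt_mul_of_neg_right hi hlogp
  calc c ^ (Real.log pleak / Real.log (1 - pnoise))
      = Real.exp ((Real.log pleak / Real.log (1 - pnoise)) * Real.log c) := by
        rw [Real.rpow_def_of_pos h5]; ring_nf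
    _ < Real.exp ((κ : ℝ) * Real.log pleak) := by
        apply Real.exp_lt_exp.mpr
        calc (Real.log pleak / Real.log (1 - pnoise)) * Real.log c
            = (Real.log c / Real.log (1 - pnoise)) * Real.log pleak := by ring
          _ < (κ : ℝ) * Real.log pleak := hmul
    _ = pleak ^ κ := by
        rw [Real.exp_nat_mul, Real.exp_log h3]
end
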